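/- Let λ : [0,T) → (0,∞) be continuous and suppose there exist constants c₁, c₂ > 0 such that λ(t)² · ln|ln λ(t)| = c₁ (T − t) for all t ∈ [0,T), with λ(t) → 0 as t → T. Then ∫₀^T λ(t)^{−μ} dt < ∞ for every μ < 2. -/

import Mathlib

open Set MeasureTheory Filter

/-- Integrability of negative powers of the scaling parameter in the log-log regime:
if `λ(t)² ln|ln λ(t)| = c₁(T - t)` and `λ(t) → 0` as `t → T`, then
`∫₀^T λ(t)^{-μ} dt < ∞` for every `μ < 2`. -/
theorem loglog_scale_integrability (T c₁ : ℝ) (hT : 0 < T) (hc₁ : 0 < c₁)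
    (lam : ℝ → ℝ)
    (hpos : ∀ t ∈ Ico (0:ℝ) T, 0 < lam t)
    (hcont : ContinuousOn lam (Ico 0 T))
    (heq : ∀ t ∈ Ico (0:ℝ) T, (lam t)^2 * Real.log |Real.log (lam t)| = c₁ * (T - t))
    (hlim : Tendsto lam (nhdsWithin T (Iio T)) (nhds 0)) :
    ∀ μ : ℝ, μ < 2 → IntegrableOn (fun t => lam t ^ (-μ)) (Ico 0 T) volume := by
  intro μ hμ
  set μ' : ℝ := max μ 1 with hμ'def
  have hμμ' : μ ≤ μ' := le_max_left _ _
  have hμ'1 : 1 ≤ μ' := le_max_right _ _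
  have hμ'2 : μ' < 2 := max_lt hμ (by norm_num)
  set δ : ℝ := (2 - μ') / 2 with hδdef
  have hδpos : 0 < δ := div_pos (by linarith) two_pos
  have h2δ : 0 < 2 - δ := by rw [hδdef]; linarith
  set p : ℝ := μ' / (2 - δ) with hpdef
  have hp0 : 0 < p := div_pos (by linarith) h2δ
  have hp1 : p < 1 := by
    rw [hpdef, div_lt_one h2δ, hδdef]; linarith
  -- find a point `a` past which `lam` is small
  have hmem : {x : ℝ | x < Real.exp (-1)} ∈ nhds (0:ℝ) := Iio_mem_nhds (Real.exp_pos _)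
  have hev : {t : ℝ | lam t < Real.exp (-1)} ∈ nhdsWithin T (Iio T) := hlim hmem
  obtain ⟨l, hl, hIoo⟩ := mem_nhdsLT_iff_exists_Ioo_subset.mp hev
  have hlT : l < T := hl
  set a : ℝ := max 0 ((l + T) / 2) with hadef
  have ha0 : 0 ≤ a := le_max_left _ _
  have haT : a < T := max_lt hT (by linarith)
  have hla : l < a := lt_of_lt_of_le (by linarith) (le_max_right _ _)
  have hsmall : ∀ t ∈ Ico a T, lam t < Real.exp (-1) := fun t ht =>
    hIoo ⟨lt_of_lt_of_le hla ht.1, ht.2⟩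
  -- continuity of the integrand
  have hfc : ContinuousOn (fun t => lam t ^ (-μ)) (Ico 0 T) :=
    hcont.rpow_const fun t ht => Or.inl (hpos t ht).ne'
  -- integrability on the compact piece
  have hIccsub : Icc (0:ℝ) a ⊆ Ico 0 T := fun x hx => ⟨hx.1, lt_of_le_of_lt hx.2 haT⟩
  have h1 : IntegrableOn (fun t => lam t ^ (-μ)) (Ico 0 a) volume :=
    ((hfc.mono hIccsub).integrableOn_Icc).mono_set Ico_subset_Icc_self
  -- integrability of the dominating function on the piece near T
  have hbase : IntervalIntegrable (fun x : ℝ => x ^ (-p)) volume (T - a) 0 :=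
    intervalIntegral.intervalIntegrable_rpow' (by linarith)
  have hgi : IntervalIntegrable (fun t : ℝ => (T - t) ^ (-p)) volume a T := by
    have := hbase.comp_sub_left T
    simpa [sub_sub_cancel] using this
  have hg : IntegrableOn (fun t : ℝ => (T - t) ^ (-p)) (Ico a T) volume := by
    rw [integrableOn_Ico_iff_integrableOn_Ioo]
    exact (integrableOn_Ioc_iff_integrableOn_Ioo).mp
      ((intervalIntegrable_iff_integrableOn_Ioc_of_le haT.le).mp hgi)
  have hg' : IntegrableOn (fun t : ℝ => (δ * c₁) ^ (-p) * (T - t) ^ (-p)) (Ico a T) volume :=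
    hg.const_mul _
  -- pointwise bound on `Ico a T`
  have hbound : ∀ t ∈ Ico a T,
      ‖lam t ^ (-μ)‖ ≤ (δ * c₁) ^ (-p) * (T - t) ^ (-p) := by
    intro t ht
    have htT : t < T := ht.2
    have ht0 : t ∈ Ico (0:ℝ) T := ⟨le_trans ha0 ht.1, htT⟩
    have hx0 : 0 < lam t := hpos t ht0
    have hxe : lam t < Real.exp (-1) := hsmall t ht
    set x := lam t with hxdef
    have hlogx : Real.log x < -1 := by
      calc Real.log x < Real.log (Real.exp (-1)) := Real.log_lt_log hx0 hxe
        _ = -1 := Real.log_exp _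
    have habs : |Real.log x| = -Real.log x := abs_of_neg (by linarith)
    have hL1 : Real.log |Real.log x| ≤ -Real.log x := by
      rw [habs]
      have := Real.log_le_sub_one_of_pos (show (0:ℝ) < -Real.log x by linarith)
      linarith
    have hrp : (0:ℝ) < x ^ (-δ) := Real.rpow_pos_of_pos hx0 _
    have h2' : -δ * Real.log x ≤ x ^ (-δ) := by
      have h := Real.log_le_sub_one_of_pos hrp
      rw [Real.log_rpow hx0] at h
      linarith
    have hL2 : -Real.log x ≤ x ^ (-δ) / δ := by
      rw [le_div_iff₀ hδpos]; nlinarith [h2']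
    have heqt := heq t ht0
    have hxx : x^2 * Real.log |Real.log x| ≤ x^2 * (x ^ (-δ) / δ) :=
      mul_le_mul_of_nonneg_left (hL1.trans hL2) (by positivity)
    have hpow : x^2 * x ^ (-δ) = x ^ ((2:ℝ) - δ) := by
      rw [← Real.rpow_natCast x 2, ← Real.rpow_add hx0]
      ring_nf
    have hkey : δ * c₁ * (T - t) ≤ x ^ ((2:ℝ) - δ) := by
      have h3 : c₁ * (T - t) ≤ x ^ ((2:ℝ) - δ) / δ := by
        rw [← heqt, ← hpow]
        calc x^2 * Real.log |Real.log x| ≤ x^2 * (x ^ (-δ) / δ) := hxx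
          _ = x^2 * x ^ (-δ) / δ := by ring
      have := (le_div_iff₀ hδpos).mp h3
      linarith
    have hA : 0 < δ * c₁ * (T - t) :=
      mul_pos (mul_pos hδpos hc₁) (sub_pos.2 htT)
    have hx1 : x ≤ 1 :=
      le_of_lt (hxe.trans (Real.exp_lt_one_iff.mpr (by norm_num)))
    have hm1 : x ^ (-μ) ≤ x ^ (-μ') :=
      Real.rpow_le_rpow_of_exponent_ge hx0 hx1 (neg_le_neg hμμ')
    have hm2 : x ^ (-μ') ≤ (δ * c₁ * (T - t)) ^ (-p) := by
      have hcomp : (x ^ ((2:ℝ) - δ)) ^ (-p) ≤ (δ * c₁ * (T - t)) ^ (-p) :=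
        Real.rpow_le_rpow_of_nonpos hA hkey (by linarith)
      have h2 : (x ^ ((2:ℝ) - δ)) ^ (-p) = x ^ (-μ') := by
        rw [← Real.rpow_mul hx0.le]
        congr 1
        rw [hpdef]
        field_simp
      rwa [h2] at hcomp
    have hm3 : (δ * c₁ * (T - t)) ^ (-p) = (δ * c₁) ^ (-p) * (T - t) ^ (-p) :=
      Real.mul_rpow (by positivity) (sub_pos.2 htT).le
    rw [Real.norm_eq_abs, abs_of_pos (Real.rpow_pos_of_pos hx0 _)]
    calc x ^ (-μ) ≤ x ^ (-μ') := hm1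
      _ ≤ (δ * c₁ * (T - t)) ^ (-p) := hm2
      _ = (δ * c₁) ^ (-p) * (T - t) ^ (-p) := hm3
  -- measurability on `Ico a T`
  have hsub : Ico a T ⊆ Ico 0 T := fun x hx => ⟨le_trans ha0 hx.1, hx.2⟩
  have hmeas : AEStronglyMeasurable (fun t => lam t ^ (-μ))
      (volume.restrict (Ico a T)) :=
    (hfc.mono hsub).aestronglyMeasurable measurableSet_Ico
  have h2 : IntegrableOn (fun t => lam t ^ (-μ)) (Ico a T) volume := by
    apply Integrable.mono' hg' hmeas
    filter_upwards [ae_restrict_mem measurableSet_Ico] with t ht using hbound t ht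
  have hun : Ico (0:ℝ) a ∪ Ico a T = Ico 0 T := Ico_union_Ico_eq_Ico ha0 haT.le
  exact hun ▸ h1.union h2
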